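/- The Laplace mechanism is ε-differentially private: let f : S → ℝ be a function with ℓ₁-sensitivity Δ = sup{|f(s) − f(s')| : s, s' adjacent}, and let M(s) = f(s) + Z where Z ~ Lap(Δ/ε) has density (ε/(2Δ))·e^{−ε|z|/Δ}. Then for all adjacent s, s' and all measurable sets R ⊆ ℝ, P(M(s) ∈ R) ≤ e^ε · P(M(s') ∈ R). -/
import Mathlib


open MeasureTheory

/-- The Laplace mechanism is `ε`-differentially private: if `f` has sensitivity at
most `Δ` over adjacent inputs and `M(s) = f(s) + Lap(Δ/ε)`, then for all adjacent
`s, s'` and measurable `R ⊆ ℝ`, `P(M(s) ∈ R) ≤ e^ε · P(M(s') ∈ R)`.  The law of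
`M(s)` is the Laplace density `(ε/(2Δ))·e^{−ε|x−f(s)|/Δ}` w.r.t. Lebesgue measure. -/
theorem stmt13 {S : Type*} (adj : S → S → Prop) (hadj : Symmetric adj)
    (f : S → ℝ) (Δ ε : ℝ) (hΔ : 0 < Δ) (hε : 0 < ε)
    (hsens : ∀ s s', adj s s' → |f s - f s'| ≤ Δ)
    (M : S → Measure ℝ)
    (hM : ∀ s, M s = volume.withDensity
      (fun x => ENNReal.ofReal (ε / (2 * Δ) * Real.exp (-(ε * |x - f s|) / Δ)))) :
    ∀ s s', adj s s' → ∀ R : Set ℝ, MeasurableSet R →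
      M s R ≤ ENNReal.ofReal (Real.exp ε) * M s' R := by
  intro s s' hss' R hR
  have key : ∀ x : ℝ,
      ENNReal.ofReal (ε / (2 * Δ) * Real.exp (-(ε * |x - f s|) / Δ)) ≤
      ENNReal.ofReal (Real.exp ε) *
        ENNReal.ofReal (ε / (2 * Δ) * Real.exp (-(ε * |x - f s'|) / Δ)) := by
    intro x
    rw [← ENNReal.ofReal_mul (Real.exp_pos ε).le]
    apply ENNReal.ofReal_le_ofReal
    have hc : 0 ≤ ε / (2 * Δ) := by positivity
    rw [mul_comm (Real.exp ε), mul_assoc, ← Real.exp_add]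
    apply mul_le_mul_of_nonneg_left _ hc
    apply Real.exp_le_exp.2
    have htri : |x - f s'| ≤ |x - f s| + Δ := by
      have h : x - f s' = (x - f s) + (f s - f s') := by ring
      rw [h]
      exact le_trans (abs_add_le _ _) (by linarith [hsens s s' hss'])
    rw [div_le_iff₀ hΔ, add_mul, div_mul_cancel₀ _ hΔ.ne']
    nlinarith [hε.le]
  rw [hM s, hM s', withDensity_apply _ hR, withDensity_apply _ hR,
    ← lintegral_const_mul' _ _ (by simp : ENNReal.ofReal (Real.exp ε) ≠ ⊤)]
  exact setLIntegral_mono' hR (fun x _ => key x)
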